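/- (Riemann-sum p-norm error) Suppose G : [a,b] → ℝ is Lipschitz with constant at most A, L = b − a, and t_k = a + kL/n for 0 ≤ k ≤ n. Then for 1 ≤ p < ∞, |((L/n)∑_{k=0}^{n−1} |G(t_k)|^p)^{1/p} − ‖G‖_{L^p([a,b])}| ≤ A L^{1+1/p}/n, and for p = ∞, |max_{0≤k≤n} |G(t_k)| − ‖G‖_{L^∞}| ≤ AL/n. -/

import Mathlib

open MeasureTheory Real Set Finset

private lemma grid_cover (a b : ℝ) (hab : a < b) (n : ℕ) (hn : 0 < n) {x : ℝ}
    (hx : x ∈ Set.Ioc a b) :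
    ∃ k < n, x ∈ Set.Ioc (a + (k : ℝ) * (b - a) / n) (a + ((k : ℕ) + 1 : ℝ) * (b - a) / n) := by
  have hL : (0:ℝ) < b - a := sub_pos.mpr hab
  have hn' : (0:ℝ) < n := Nat.cast_pos.mpr hn
  set y : ℝ := (x - a) * n / (b - a) with hy
  have hy0 : 0 < y := div_pos (mul_pos (by linarith [hx.1]) hn') hL
  have hyn : y ≤ n := by
    rw [div_le_iff₀ hL]
    nlinarith [hx.2]
  have hxy : a + y * (b - a) / n = x := by rw [hy]; field_simp; ring
  set m := ⌈y⌉₊ with hm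
  have hm1 : 1 ≤ m := Nat.ceil_pos.mpr hy0
  have hcast : ((m - 1 : ℕ) : ℝ) = (m : ℝ) - 1 := by
    push_cast [Nat.cast_sub hm1]; ring
  refine ⟨m - 1, ?_, ?_, ?_⟩
  · have : m ≤ n := Nat.ceil_le.mpr hyn
    omega
  · have h1 : ((m - 1 : ℕ) : ℝ) < y := by
      have h2 : (m : ℝ) < y + 1 := Nat.ceil_lt_add_one hy0.le
      rw [hcast]; linarith
    have := mul_lt_mul_of_pos_right h1 (div_pos hL hn')
    rw [← hxy, mul_div_assoc, mul_div_assoc]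
    linarith
  · have h1 : y ≤ ((m - 1 : ℕ) : ℝ) + 1 := by
      rw [hcast]; linarith [Nat.le_ceil y]
    have := mul_le_mul_of_nonneg_right h1 (div_pos hL hn').le
    rw [← hxy, mul_div_assoc, mul_div_assoc]
    linarith

private lemma grid_near (a b : ℝ) (hab : a < b) (n : ℕ) (hn : 0 < n) {x : ℝ}
    (hx : x ∈ Set.Icc a b) :
    ∃ k ≤ n, |x - (a + (k : ℝ) * (b - a) / n)| ≤ (b - a) / n := by
  have hL : (0:ℝ) < b - a := sub_pos.mpr hab
  have hn' : (0:ℝ) < n := Nat.cast_pos.mpr hn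
  set y : ℝ := (x - a) * n / (b - a) with hy
  have hy0 : 0 ≤ y := by
    apply div_nonneg (mul_nonneg (by linarith [hx.1]) hn'.le) hL.le
  have hyn : y ≤ n := by
    rw [div_le_iff₀ hL]
    nlinarith [hx.2]
  have hxy : a + y * (b - a) / n = x := by rw [hy]; field_simp; ring
  refine ⟨⌊y⌋₊, ?_, ?_⟩
  · have := Nat.floor_le_of_le hyn
    simpa using this
  · have h1 : (⌊y⌋₊ : ℝ) ≤ y := Nat.floor_le hy0
    have h2 : y < (⌊y⌋₊ : ℝ) + 1 := Nat.lt_floor_add_one y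
    have e1 := mul_le_mul_of_nonneg_right h1 (div_pos hL hn').le
    have e2 := mul_lt_mul_of_pos_right h2 (div_pos hL hn')
    rw [abs_of_nonneg (by rw [← hxy, mul_div_assoc, mul_div_assoc]; linarith)]
    rw [← hxy, mul_div_assoc, mul_div_assoc]
    have : ((⌊y⌋₊:ℝ) + 1) * ((b-a)/n) = ⌊y⌋₊ * ((b-a)/n) + (b-a)/n := by ring
    rw [this] at e2
    linarith

/-- Riemann-sum error for `p`-norms: if `G : [a,b] → ℝ` is Lipschitz with constant at
most `A`, `L = b − a`, and `t_k = a + kL/n`, then for `1 ≤ p < ∞`,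
`|((L/n)∑_{k<n} |G(t_k)|^p)^{1/p} − ‖G‖_{L^p([a,b])}| ≤ A L^{1+1/p}/n`, and for `p = ∞`,
`|max_{0≤k≤n} |G(t_k)| − ‖G‖_{L^∞([a,b])}| ≤ A L / n`. -/
theorem riemann_pnorm_error (a b : ℝ) (hab : a < b) (A : ℝ) (hA : 0 ≤ A)
    (G : ℝ → ℝ) (hG : ∀ x ∈ Icc a b, ∀ y ∈ Icc a b, |G x - G y| ≤ A * |x - y|)
    (n : ℕ) (hn : 0 < n) :
    (∀ p : ℝ, 1 ≤ p →
      |(((b - a) / n) * ∑ k ∈ Finset.range n, |G (a + k * (b - a) / n)| ^ p) ^ (1 / p) -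
          (∫ x in a..b, |G x| ^ p) ^ (1 / p)| ≤
        A * (b - a) ^ (1 + 1 / p) / n) ∧
    |((Finset.range (n + 1)).sup' (by simp) fun k => |G (a + k * (b - a) / n)|) -
        sSup ((fun x => |G x|) '' Icc a b)| ≤ A * (b - a) / n := by
  constructor
  · intro p hp
    have hL : (0:ℝ) < b - a := sub_pos.mpr hab
    have hn' : (0:ℝ) < n := Nat.cast_pos.mpr hn
    have hp0 : 0 < p := lt_of_lt_of_le one_pos hp
    have hip : (0:ℝ) ≤ 1 / p := by positivity
    set t : ℕ → ℝ := fun k => a + k * (b - a) / n with ht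
    have ht_mono : ∀ i j : ℕ, i ≤ j → t i ≤ t j := by
      intro i j hij
      have h1 : (i:ℝ) ≤ j := Nat.cast_le.mpr hij
      have := mul_le_mul_of_nonneg_right h1 (div_pos hL hn').le
      simp only [ht, mul_div_assoc]
      linarith
    have ht_mem : ∀ k ≤ n, t k ∈ Set.Icc a b := by
      intro k hk
      have hk' : (k:ℝ) ≤ n := Nat.cast_le.mpr hk
      refine ⟨?_, ?_⟩
      · have : 0 ≤ (k:ℝ) * (b - a) / n := by positivity
        simp only [ht]; linarith
      · have h2 : (k:ℝ) * (b - a) / n ≤ b - a := by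
          rw [div_le_iff₀ hn']; nlinarith
        simp only [ht]; linarith
    have ht0 : t 0 = a := by simp [ht]
    have htn : t n = b := by
      simp only [ht]
      field_simp
      ring
    have htsucc : ∀ k : ℕ, t (k + 1) = a + ((k:ℝ) + 1) * (b - a) / n := by
      intro k; simp only [ht]; push_cast; ring
    have hstep : ∀ k : ℕ, t (k + 1) - t k = (b - a) / n := by
      intro k
      rw [htsucc k]
      simp only [ht]; ring
    clear_value t
    have hGcont : ContinuousOn G (Set.Icc a b) := by
      have : LipschitzOnWith (Real.toNNReal A) G (Set.Icc a b) := by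
        rw [lipschitzOnWith_iff_dist_le_mul]
        intro x hx y hy
        rw [Real.dist_eq, Real.dist_eq, Real.coe_toNNReal A hA]
        exact hG x hx y hy
      exact this.continuousOn
    obtain ⟨M, hM⟩ := isCompact_Icc.exists_bound_of_continuousOn hGcont
    have hM' : ∀ x ∈ Set.Icc a b, |G x| ≤ M := by
      intro x hx; simpa [Real.norm_eq_abs] using hM x hx
    set c := A * ((b - a) / n) with hc
    have hc0 : 0 ≤ c := by positivity
    set S : ℝ → ℝ := fun x =>
      ∑ k ∈ Finset.range n, (Set.Ioc (t k) (t (k+1))).indicator (fun _ => G (t k)) x with hS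
    have hSmeas : Measurable S :=
      Finset.measurable_sum _ fun k _ => measurable_const.indicator measurableSet_Ioc
    have hdisj : ∀ i ∈ Finset.range n, ∀ j ∈ Finset.range n, i ≠ j →
        Disjoint (Set.Ioc (t i) (t (i+1))) (Set.Ioc (t j) (t (j+1))) := by
      intro i _ j _ hij
      rw [Set.Ioc_disjoint_Ioc]
      rcases hij.lt_or_gt with h | h
      · exact le_trans (min_le_left _ _) (le_trans (ht_mono _ _ h) (le_max_right _ _))
      · exact le_trans (min_le_right _ _) (le_trans (ht_mono _ _ h) (le_max_left _ _))
    have hSval : ∀ k < n, ∀ x ∈ Set.Ioc (t k) (t (k+1)), S x = G (t k) := by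
      intro k hk x hx
      simp only [hS]
      rw [Finset.sum_eq_single_of_mem k (Finset.mem_range.mpr hk)]
      · exact Set.indicator_of_mem hx _
      · intro j hj hjk
        exact Set.indicator_of_notMem
          (fun hxj => Set.disjoint_left.mp (hdisj j hj k (Finset.mem_range.mpr hk) hjk) hxj hx) _
    have hmem_piece : ∀ k < n, ∀ x ∈ Set.Ioc (t k) (t (k+1)), x ∈ Set.Icc a b := by
      intro k hk x hx
      exact ⟨le_trans (ht0 ▸ ht_mono 0 k (Nat.zero_le k)) hx.1.le,
        le_trans hx.2 (htn ▸ ht_mono (k+1) n hk)⟩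
    have hcover : ∀ x ∈ Set.Ioc a b, ∃ k < n, x ∈ Set.Ioc (t k) (t (k+1)) := by
      intro x hx
      obtain ⟨k, hk, hmem⟩ := grid_cover a b hab n hn hx
      refine ⟨k, hk, ?_⟩
      simp only [ht]
      push_cast
      exact hmem
    have hclose : ∀ x ∈ Set.Ioc a b, |S x - G x| ≤ c := by
      intro x hx
      obtain ⟨k, hk, hmem⟩ := hcover x hx
      rw [hSval k hk x hmem]
      have h1 := hG (t k) (ht_mem k hk.le) x (hmem_piece k hk x hmem)
      have h2 : |t k - x| ≤ (b - a) / n := by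
        rw [abs_of_nonpos (by linarith [hmem.1])]
        linarith [hmem.1, hmem.2, hstep k]
      calc |G (t k) - G x| ≤ A * |t k - x| := h1
        _ ≤ c := by rw [hc]; exact mul_le_mul_of_nonneg_left h2 hA
    have hSbd : ∀ x ∈ Set.Ioc a b, |S x| ≤ M := by
      intro x hx
      obtain ⟨k, hk, hmem⟩ := hcover x hx
      rw [hSval k hk x hmem]
      exact hM' _ (ht_mem k hk.le)
    -- measure-theoretic setup
    set μ := volume.restrict (Set.Ioc a b) with hμ
    have hGae : AEStronglyMeasurable G μ :=
      (hGcont.mono Set.Ioc_subset_Icc_self).aestronglyMeasurable measurableSet_Ioc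
    set F : ℝ → ENNReal := fun x => ENNReal.ofReal |G x| with hF
    set Sf : ℝ → ENNReal := fun x => ENNReal.ofReal |S x| with hSf
    have hFae : AEMeasurable F μ := by
      apply ENNReal.measurable_ofReal.comp_aemeasurable
      exact hGae.norm.aemeasurable.congr (by filter_upwards with x; simp [Real.norm_eq_abs])
    have hSfae : AEMeasurable Sf μ :=
      (ENNReal.measurable_ofReal.comp hSmeas.abs).aemeasurable
    set IG := ∫⁻ x, F x ^ p ∂μ with hIG
    set IS := ∫⁻ x, Sf x ^ p ∂μ with hIS
    have hbound : ∀ (H : ℝ → ENNReal), (∀ x ∈ Set.Ioc a b, H x ≤ ENNReal.ofReal M) →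
        (∫⁻ x, H x ^ p ∂μ) ≠ ⊤ := by
      intro H hH
      have h1 : (∫⁻ x, H x ^ p ∂μ) ≤ ∫⁻ _x, ENNReal.ofReal M ^ p ∂μ := by
        apply lintegral_mono_ae
        rw [ae_restrict_iff' measurableSet_Ioc]
        filter_upwards with x hx
        exact ENNReal.rpow_le_rpow (hH x hx) hp0.le
      rw [lintegral_const, Measure.restrict_apply_univ, Real.volume_Ioc] at h1
      exact (lt_of_le_of_lt h1 (ENNReal.mul_lt_top
        (ENNReal.rpow_lt_top_of_nonneg hp0.le ENNReal.ofReal_ne_top)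
        ENNReal.ofReal_lt_top)).ne
    have hIGtop : IG ≠ ⊤ :=
      hbound F fun x hx => ENNReal.ofReal_le_ofReal (hM' x (Set.Ioc_subset_Icc_self hx))
    have hIStop : IS ≠ ⊤ :=
      hbound Sf fun x hx => ENNReal.ofReal_le_ofReal (hSbd x hx)
    -- value of IS
    have hunion : Set.Ioc a b = ⋃ k ∈ Finset.range n, Set.Ioc (t k) (t (k+1)) := by
      ext x
      simp only [Set.mem_iUnion, Finset.mem_range, exists_prop]
      constructor
      · exact fun hx => hcover x hx
      · rintro ⟨k, hk, hx⟩
        exact Set.mem_of_mem_of_subset hx (Set.Ioc_subset_Ioc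
          (ht0 ▸ ht_mono 0 k (Nat.zero_le k)) (htn ▸ ht_mono (k+1) n hk))
    have hISval : IS = ∑ k ∈ Finset.range n,
        ENNReal.ofReal (|G (t k)| ^ p) * ENNReal.ofReal ((b - a) / n) := by
      have e1 : IS = ∫⁻ x in ⋃ k ∈ Finset.range n, Set.Ioc (t k) (t (k+1)), Sf x ^ p := by
        rw [hIS, hμ, ← hunion]
      rw [e1, lintegral_biUnion_finset hdisj (fun k _ => measurableSet_Ioc)]
      apply Finset.sum_congr rfl
      intro k hk
      have hk' := Finset.mem_range.mp hk
      have hcong : ∀ x ∈ Set.Ioc (t k) (t (k+1)),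
          Sf x ^ p = ENNReal.ofReal (|G (t k)| ^ p) := by
        intro x hx
        rw [hSf]
        simp only
        rw [hSval k hk' x hx, ENNReal.ofReal_rpow_of_nonneg (abs_nonneg _) hp0.le]
      rw [setLIntegral_congr_fun measurableSet_Ioc hcong,
        setLIntegral_const, Real.volume_Ioc, hstep k]
    have hISr : ((b - a) / n) * (∑ k ∈ Finset.range n, |G (t k)| ^ p) = IS.toReal := by
      rw [hISval, ENNReal.toReal_sum (fun k _ => by
        exact ENNReal.mul_ne_top ENNReal.ofReal_ne_top ENNReal.ofReal_ne_top)]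
      rw [Finset.mul_sum]
      apply Finset.sum_congr rfl
      intro k _
      rw [ENNReal.toReal_mul, ENNReal.toReal_ofReal (by positivity),
        ENNReal.toReal_ofReal (by positivity)]
      ring
    -- value of IG
    have hIGr : (∫ x in a..b, |G x| ^ p) = IG.toReal := by
      rw [intervalIntegral.integral_of_le hab.le]
      rw [MeasureTheory.integral_eq_lintegral_of_nonneg_ae
        (Filter.Eventually.of_forall fun x => by positivity)
        (((hGcont.abs.rpow_const fun x _ => Or.inr hp0.le).mono
          Set.Ioc_subset_Icc_self).aestronglyMeasurable measurableSet_Ioc)]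
      congr 1
      apply lintegral_congr
      intro x
      rw [hF]
      simp only
      rw [ENNReal.ofReal_rpow_of_nonneg (abs_nonneg _) hp0.le]
    -- Minkowski
    set D : ENNReal := ENNReal.ofReal c * ENNReal.ofReal (b - a) ^ (1/p) with hD
    have hmink : ∀ F1 F2 : ℝ → ENNReal, AEMeasurable F2 μ →
        (∀ᵐ x ∂μ, F1 x ≤ F2 x + ENNReal.ofReal c) →
        (∫⁻ x, F1 x ^ p ∂μ) ^ (1/p) ≤ (∫⁻ x, F2 x ^ p ∂μ) ^ (1/p) + D := by
      intro F1 F2 h2 hle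
      have step1 : (∫⁻ x, F1 x ^ p ∂μ) ^ (1/p) ≤
          (∫⁻ x, (F2 + fun _ : ℝ => ENNReal.ofReal c) x ^ p ∂μ) ^ (1/p) := by
        apply ENNReal.rpow_le_rpow _ hip
        apply lintegral_mono_ae
        filter_upwards [hle] with x hx
        exact ENNReal.rpow_le_rpow hx hp0.le
      refine step1.trans ((ENNReal.lintegral_Lp_add_le h2 aemeasurable_const hp).trans ?_)
      have e2 : (∫⁻ _x : ℝ, ENNReal.ofReal c ^ p ∂μ) ^ (1/p) = D := by
        rw [lintegral_const, Measure.restrict_apply_univ, Real.volume_Ioc,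
          ENNReal.mul_rpow_of_nonneg _ _ hip, ← ENNReal.rpow_mul,
          mul_one_div_cancel hp0.ne', ENNReal.rpow_one, hD]
      rw [e2]
    have dir1 : IG ^ (1/p) ≤ IS ^ (1/p) + D := by
      apply hmink F Sf hSfae
      rw [ae_restrict_iff' measurableSet_Ioc]
      filter_upwards with x hx
      have h1 := hclose x hx
      have h2 : |G x| ≤ |S x| + c := by
        have := abs_sub_abs_le_abs_sub (G x) (S x)
        rw [abs_sub_comm] at h1
        linarith
      calc F x ≤ ENNReal.ofReal (|S x| + c) := ENNReal.ofReal_le_ofReal h2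
        _ = Sf x + ENNReal.ofReal c := ENNReal.ofReal_add (abs_nonneg _) hc0
    have dir2 : IS ^ (1/p) ≤ IG ^ (1/p) + D := by
      apply hmink Sf F hFae
      rw [ae_restrict_iff' measurableSet_Ioc]
      filter_upwards with x hx
      have h1 := hclose x hx
      have h2 : |S x| ≤ |G x| + c := by
        have := abs_sub_abs_le_abs_sub (S x) (G x)
        linarith
      calc Sf x ≤ ENNReal.ofReal (|G x| + c) := ENNReal.ofReal_le_ofReal h2
        _ = F x + ENNReal.ofReal c := ENNReal.ofReal_add (abs_nonneg _) hc0
    -- convert to reals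
    have hNS : IS ^ (1/p) ≠ ⊤ := (ENNReal.rpow_lt_top_of_nonneg hip hIStop).ne
    have hNG : IG ^ (1/p) ≠ ⊤ := (ENNReal.rpow_lt_top_of_nonneg hip hIGtop).ne
    have hDval : D = ENNReal.ofReal (c * (b - a) ^ (1/p)) := by
      rw [hD, ENNReal.ofReal_mul hc0, ENNReal.ofReal_rpow_of_nonneg hL.le hip]
    have hDtop : D ≠ ⊤ := by rw [hDval]; exact ENNReal.ofReal_ne_top
    have hcd0 : (0:ℝ) ≤ c * (b - a) ^ (1/p) := by positivity
    have r1 : (IG ^ (1/p)).toReal ≤ (IS ^ (1/p)).toReal + c * (b - a) ^ (1/p) := by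
      have := ENNReal.toReal_mono (ENNReal.add_ne_top.mpr ⟨hNS, hDtop⟩) dir1
      rwa [ENNReal.toReal_add hNS hDtop, hDval, ENNReal.toReal_ofReal hcd0] at this
    have r2 : (IS ^ (1/p)).toReal ≤ (IG ^ (1/p)).toReal + c * (b - a) ^ (1/p) := by
      have := ENNReal.toReal_mono (ENNReal.add_ne_top.mpr ⟨hNG, hDtop⟩) dir2
      rwa [ENNReal.toReal_add hNG hDtop, hDval, ENNReal.toReal_ofReal hcd0] at this
    have hR : A * (b - a) ^ (1 + 1/p) / n = c * (b - a) ^ (1/p) := by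
      rw [Real.rpow_add hL, Real.rpow_one, hc]; ring
    have hgoal : ∑ k ∈ Finset.range n, |G (a + (k:ℝ) * (b - a) / n)| ^ p
        = ∑ k ∈ Finset.range n, |G (t k)| ^ p :=
      Finset.sum_congr rfl fun k _ => by simp only [ht]
    rw [hR, hgoal, hISr, hIGr, ENNReal.toReal_rpow, ENNReal.toReal_rpow, abs_sub_le_iff]
    constructor <;> linarith
  ·
    have hL : (0:ℝ) < b - a := sub_pos.mpr hab
    have hn' : (0:ℝ) < n := Nat.cast_pos.mpr hn
    set t : ℕ → ℝ := fun k => a + k * (b - a) / n with ht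
    have ht_mem : ∀ k ≤ n, t k ∈ Set.Icc a b := by
      intro k hk
      have hk' : (k:ℝ) ≤ n := Nat.cast_le.mpr hk
      constructor
      · have : 0 ≤ (k:ℝ) * (b - a) / n := by positivity
        simp only [ht]; linarith
      · simp only [ht]
        have h2 : (k:ℝ) * (b - a) / n ≤ b - a := by
          rw [div_le_iff₀ hn']; nlinarith
        linarith
    have hGcont : ContinuousOn G (Set.Icc a b) := by
      have : LipschitzOnWith (Real.toNNReal A) G (Set.Icc a b) := by
        rw [lipschitzOnWith_iff_dist_le_mul]
        intro x hx y hy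
        rw [Real.dist_eq, Real.dist_eq, Real.coe_toNNReal A hA]
        exact hG x hx y hy
      exact this.continuousOn
    set M := sSup ((fun x => |G x|) '' Set.Icc a b) with hM
    have hne : (Set.Icc a b).Nonempty := Set.nonempty_Icc.mpr hab.le
    have hbdd : BddAbove ((fun x => |G x|) '' Set.Icc a b) :=
      (isCompact_Icc.image_of_continuousOn hGcont.abs).bddAbove
    set J := (Finset.range (n + 1)).sup' (by simp) fun k => |G (t k)| with hJ
    have hJleM : J ≤ M := by
      apply Finset.sup'_le
      intro k hk
      exact le_csSup hbdd ⟨_, ht_mem k (Nat.lt_succ_iff.mp (Finset.mem_range.mp hk)), rfl⟩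
    have hMle : M ≤ J + A * ((b - a) / n) := by
      apply csSup_le (hne.image _)
      rintro _ ⟨x, hx, rfl⟩
      obtain ⟨k, hk, hnear⟩ := grid_near a b hab n hn hx
      have h1 : |G x| - |G (t k)| ≤ A * ((b - a) / n) := by
        have h2 := hG x hx (t k) (ht_mem k hk)
        have habs : |G x| - |G (t k)| ≤ |G x - G (t k)| := abs_sub_abs_le_abs_sub _ _
        have h3 : A * |x - t k| ≤ A * ((b - a) / n) := mul_le_mul_of_nonneg_left hnear hA
        simp only [ht] at h2 ⊢
        linarith
      have h3 : |G (t k)| ≤ J := Finset.le_sup' (fun j => |G (t j)|) (Finset.mem_range.mpr (Nat.lt_succ_of_le hk))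
      linarith
    have h0 : 0 ≤ A * ((b - a) / n) := by positivity
    have he : A * (b - a) / n = A * ((b - a) / n) := by ring
    rw [abs_sub_le_iff, he]
    constructor <;> linarith
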